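/- Let {0} = L_0 ⊂ L_1 ⊂ ⋯ ⊂ L_m = L be a (q, γ)-filtration of a full-rank lattice L ⊆ ℝⁿ with γ ≥ 2, let 1/γ ≤ α < 1, and for 1 ≤ j ≤ m let E_{j,α}(x) = Σ_{i=j}^m α^{i−j}·π_i(x), where π_i is the orthogonal projection onto span(L_i) ∩ span(L_{i−1})^⊥. Then: (1) μ(L_j) ≤ q·λ₁(E_{j,α}(L)) for all 1 ≤ j ≤ m, and (2) λ₁(E_{j+1,α}(L)) ≥ γ·λ₁(E_{j,α}(L)) for all 1 ≤ j < m. -/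

import Mathlib

open Metric Submodule
noncomputable section

/-- The length of a shortest nonzero vector of a set `A`. -/
def lambda1 {E : Type*} [NormedAddCommGroup E] (A : Set E) : ℝ :=
  sInf (norm '' (A \ {0}))

/-- The covering radius of a lattice (given as a set): the supremum, over points `x` in the
real span of `A`, of the distance from `x` to `A`. -/
def covRad {E : Type*} [NormedAddCommGroup E] [NormedSpace ℝ E] (A : Set E) : ℝ :=
  sSup ((fun x => Metric.infDist x A) '' ((Submodule.span ℝ A : Submodule ℝ E) : Set E))

/-- The image of the set `A` under the orthogonal projection onto the orthogonal complement
of the real span of `S`. -/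
def projPerp {n : ℕ} (S A : Set (EuclideanSpace ℝ (Fin n))) : Set (EuclideanSpace ℝ (Fin n)) :=
  (fun x => ((orthogonalProjection (Submodule.span ℝ S)ᗮ) x : EuclideanSpace ℝ (Fin n))) '' A

/-- The quotient lattice `L_j / L_{j−1}`: the orthogonal projection of `L_j` onto the
orthogonal complement of the span of `L_{j−1}`. -/
def quotLat {n : ℕ} (Ls : ℕ → Submodule ℤ (EuclideanSpace ℝ (Fin n))) (j : ℕ) :
    Set (EuclideanSpace ℝ (Fin n)) :=
  projPerp (Ls (j - 1) : Set (EuclideanSpace ℝ (Fin n)))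
    (Ls j : Set (EuclideanSpace ℝ (Fin n)))

/-- `Ls 0 ⊂ Ls 1 ⊂ ⋯ ⊂ Ls m` is a chain of primitive sublattices of `L` from `{0}` to `L`. -/
def IsPrimitiveChain {n : ℕ} (L : Submodule ℤ (EuclideanSpace ℝ (Fin n))) (m : ℕ)
    (Ls : ℕ → Submodule ℤ (EuclideanSpace ℝ (Fin n))) : Prop :=
  Ls 0 = ⊥ ∧ Ls m = L ∧ (∀ j, j < m → Ls j < Ls (j + 1)) ∧
    ∀ j, j ≤ m → (Ls j : Set (EuclideanSpace ℝ (Fin n)))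
      = (L : Set (EuclideanSpace ℝ (Fin n)))
        ∩ (Submodule.span ℝ (Ls j : Set (EuclideanSpace ℝ (Fin n))) :
            Submodule ℝ (EuclideanSpace ℝ (Fin n)))

/-- A `(q, γ)`-filtration of `L`: a chain of primitive sublattices such that
`μ(L_j/L_{j−1}) ≤ q·λ₁(L_j/L_{j−1})/2` and `λ₁(L_{j+1}/L_j) ≥ γ·λ₁(L_j/L_{j−1})`. -/
def IsQGFiltration {n : ℕ} (L : Submodule ℤ (EuclideanSpace ℝ (Fin n))) (m : ℕ)
    (Ls : ℕ → Submodule ℤ (EuclideanSpace ℝ (Fin n))) (q γ : ℝ) : Prop :=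
  IsPrimitiveChain L m Ls ∧
  (∀ j, 1 ≤ j → j ≤ m → covRad (quotLat Ls j) ≤ q * lambda1 (quotLat Ls j) / 2) ∧
  (∀ j, 1 ≤ j → j < m → lambda1 (quotLat Ls (j + 1)) ≥ γ * lambda1 (quotLat Ls j))

/-- The `j`-th "compressed projection" embedding `E_{j,α}(x) = Σ_{i=j}^m α^{i−j}·π_i(x)`,
where `π_i` is the orthogonal projection onto `span(L_i) ∩ span(L_{i−1})ᗮ`. -/
def filtEmbed {n : ℕ} (Ls : ℕ → Submodule ℤ (EuclideanSpace ℝ (Fin n))) (m : ℕ) (α : ℝ)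
    (j : ℕ) (x : EuclideanSpace ℝ (Fin n)) : EuclideanSpace ℝ (Fin n) :=
  ∑ i ∈ Finset.Icc j m, α ^ (i - j) •
    ((orthogonalProjection
        ((Submodule.span ℝ (Ls i : Set (EuclideanSpace ℝ (Fin n)))) ⊓
          (Submodule.span ℝ (Ls (i - 1) : Set (EuclideanSpace ℝ (Fin n))))ᗮ) x :
      EuclideanSpace ℝ (Fin n)))


open Finset
open scoped RealInnerProductSpace

section Lat

lemma exists_eps_of_discrete {V : Type*} [NormedAddCommGroup V]
    (M : Submodule ℤ V) [DiscreteTopology M] :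
    ∃ ε > 0, ∀ x ∈ M, dist x (0:V) < ε → x = 0 := by
  obtain ⟨ε, hε, hb⟩ := Metric.isOpen_singleton_iff.mp (isOpen_discrete ({(0:M)} : Set M))
  refine ⟨ε, hε, fun x hx hdist => ?_⟩
  have h2 : dist (⟨x, hx⟩ : M) 0 < ε := by
    rw [Subtype.dist_eq, ZeroMemClass.coe_zero]; exact hdist
  exact congrArg Subtype.val (hb ⟨x, hx⟩ h2)

lemma discrete_of_small_norm {V : Type*} [NormedAddCommGroup V] {N : Submodule ℤ V}
    (h : ∃ ε > 0, ∀ x ∈ N, dist x (0:V) < ε → x = 0) : DiscreteTopology N := by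
  obtain ⟨ε, hε, hb⟩ := h
  rw [discreteTopology_iff_isOpen_singleton_zero]
  refine Metric.isOpen_singleton_iff.mpr ⟨ε, hε, fun y hy => ?_⟩
  rw [Subtype.dist_eq, ZeroMemClass.coe_zero] at hy
  exact Subtype.ext (hb y.1 y.2 hy)

lemma discrete_submodule_of_le {V : Type*} [NormedAddCommGroup V]
    {L M : Submodule ℤ V} [DiscreteTopology L] (h : M ≤ L) : DiscreteTopology M := by
  obtain ⟨ε, hε, hb⟩ := exists_eps_of_discrete L
  exact discrete_of_small_norm ⟨ε, hε, fun x hx hd => hb x (h hx) hd⟩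

variable {n : ℕ}

lemma exists_indep_span (M : Submodule ℤ (EuclideanSpace ℝ (Fin n))) [DiscreteTopology M] :
    ∃ (r : ℕ) (c : Fin r → EuclideanSpace ℝ (Fin n)),
      (∀ l, c l ∈ M) ∧ LinearIndependent ℝ c ∧
        Submodule.span ℝ (Set.range c) = Submodule.span ℝ (M : Set (EuclideanSpace ℝ (Fin n))) := by
  set W := Submodule.span ℝ (M : Set (EuclideanSpace ℝ (Fin n))) with hW
  have hMW : (M : Set (EuclideanSpace ℝ (Fin n))) ⊆ (W : Set (EuclideanSpace ℝ (Fin n))) :=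
    Submodule.subset_span
  set f : ↥W →ₗ[ℤ] EuclideanSpace ℝ (Fin n) := W.subtype.restrictScalars ℤ with hf
  set N : Submodule ℤ ↥W := M.comap f with hN
  haveI : DiscreteTopology N := by
    obtain ⟨ε, hε, hb⟩ := exists_eps_of_discrete M
    refine discrete_of_small_norm ⟨ε, hε, fun x hx hd => ?_⟩
    rw [Subtype.dist_eq, ZeroMemClass.coe_zero] at hd
    exact Subtype.ext (hb x.1 hx hd)
  haveI : IsZLattice ℝ N := by
    constructor
    have hinj : Function.Injective (W.subtype) := Submodule.injective_subtype W
    apply Submodule.map_injective_of_injective hinj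
    rw [Submodule.map_span, Submodule.map_top, Submodule.range_subtype]
    have himg : (W.subtype) '' ((N : Set ↥W)) = (M : Set (EuclideanSpace ℝ (Fin n))) := by
      ext x
      constructor
      · rintro ⟨y, hy, rfl⟩; exact hy
      · intro hx; exact ⟨⟨x, hMW hx⟩, hx, rfl⟩
    rw [himg]
  haveI := ZLattice.module_free ℝ N
  haveI := ZLattice.module_finite ℝ N
  set b := Module.Free.chooseBasis ℤ ↥N with hb
  set bW := Module.Basis.ofZLatticeBasis ℝ N b with hbW
  set e := Fintype.equivFin (Module.Free.ChooseBasisIndex ℤ ↥N) with he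
  refine ⟨_, fun l => ((bW (e.symm l) : ↥W) : EuclideanSpace ℝ (Fin n)), fun l => ?_, ?_, ?_⟩
  · show ((bW (e.symm l) : ↥W) : EuclideanSpace ℝ (Fin n)) ∈ M
    rw [hbW, Module.Basis.ofZLatticeBasis_apply]
    exact (b (e.symm l)).2
  · have h1 : LinearIndependent ℝ (⇑bW ∘ ⇑e.symm) :=
      bW.linearIndependent.comp e.symm e.symm.injective
    exact h1.map' W.subtype (Submodule.ker_subtype W)
  · have h1 : (Set.range fun l => ((bW (e.symm l) : ↥W) : EuclideanSpace ℝ (Fin n)))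
        = W.subtype '' (Set.range ⇑bW) := by
      have h2 : (fun l => ((bW (e.symm l) : ↥W) : EuclideanSpace ℝ (Fin n)))
          = (⇑W.subtype ∘ ⇑bW) ∘ ⇑e.symm := rfl
      rw [h2, Function.Surjective.range_comp e.symm.surjective, Set.range_comp]
    rw [h1, Submodule.span_image, bW.span_eq, Submodule.map_top, Submodule.range_subtype]

lemma infDist_le_sum_norm {M : Submodule ℤ (EuclideanSpace ℝ (Fin n))} {r : ℕ}
    {c : Fin r → EuclideanSpace ℝ (Fin n)}
    (hc : ∀ l, c l ∈ M) (hind : LinearIndependent ℝ c)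
    (hspan : Submodule.span ℝ (Set.range c)
      = Submodule.span ℝ (M : Set (EuclideanSpace ℝ (Fin n)))) :
    ∀ x ∈ Submodule.span ℝ (M : Set (EuclideanSpace ℝ (Fin n))),
      infDist x (M : Set (EuclideanSpace ℝ (Fin n))) ≤ ∑ l, ‖c l‖ := by
  intro x hx
  set W := Submodule.span ℝ (M : Set (EuclideanSpace ℝ (Fin n))) with hW
  have hcW : ∀ l, c l ∈ W := fun l => hspan ▸ Submodule.subset_span (Set.mem_range_self l)
  set c' : Fin r → ↥W := fun l => ⟨c l, hcW l⟩ with hc'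
  have hcomp : c = ⇑W.subtype ∘ c' := rfl
  have hind' : LinearIndependent ℝ c' := LinearIndependent.of_comp W.subtype (by rw [← hcomp]; exact hind)
  have hspan' : ⊤ ≤ Submodule.span ℝ (Set.range c') := by
    have hinj := Submodule.injective_subtype W
    have heq : Submodule.map W.subtype (Submodule.span ℝ (Set.range c'))
        = Submodule.map W.subtype ⊤ := by
      rw [Submodule.map_span, Submodule.map_top, Submodule.range_subtype, ← Set.range_comp,
        ← hcomp, hspan]
    exact le_of_eq (Submodule.map_injective_of_injective hinj heq).symm
  set bw : Module.Basis (Fin r) ℝ ↥W := Module.Basis.mk hind' hspan' with hbw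
  set xw : ↥W := ⟨x, hx⟩ with hxw
  have hfl : ((ZSpan.floor bw xw : ↥W) : EuclideanSpace ℝ (Fin n)) ∈ M := by
    have h1 : (ZSpan.floor bw xw : ↥W) ∈ Submodule.span ℤ (Set.range ⇑bw) := (ZSpan.floor bw xw).2
    have h2 : Submodule.map (W.subtype.restrictScalars ℤ) (Submodule.span ℤ (Set.range ⇑bw)) ≤ M := by
      rw [Submodule.map_span]
      refine Submodule.span_le.mpr ?_
      rintro _ ⟨y, ⟨l, rfl⟩, rfl⟩
      have : bw l = c' l := by rw [hbw, Module.Basis.mk_apply]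
      rw [this]
      exact hc l
    exact h2 ⟨_, h1, rfl⟩
  refine le_trans (infDist_le_dist_of_mem hfl) ?_
  have hdist : dist x ((ZSpan.floor bw xw : ↥W) : EuclideanSpace ℝ (Fin n))
      = ‖ZSpan.fract bw xw‖ := by
    rw [ZSpan.fract_apply,
      show x = ((xw : ↥W) : EuclideanSpace ℝ (Fin n)) from rfl, ← Subtype.dist_eq, dist_eq_norm]
  rw [hdist]
  refine le_trans (ZSpan.norm_fract_le bw xw) ?_
  refine le_of_eq (Finset.sum_congr rfl fun l _ => ?_)
  have : bw l = c' l := by rw [hbw, Module.Basis.mk_apply]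
  rw [this]
  rfl

lemma exists_indep_span_map (M : Submodule ℤ (EuclideanSpace ℝ (Fin n))) [DiscreteTopology M]
    (f : EuclideanSpace ℝ (Fin n) →ₗ[ℝ] EuclideanSpace ℝ (Fin n)) :
    ∃ (r' : ℕ) (c' : Fin r' → EuclideanSpace ℝ (Fin n)),
      (∀ l, c' l ∈ M.map (f.restrictScalars ℤ)) ∧ LinearIndependent ℝ c' ∧
        Submodule.span ℝ (Set.range c')
          = Submodule.span ℝ ((M.map (f.restrictScalars ℤ) : Set (EuclideanSpace ℝ (Fin n)))) := by
  obtain ⟨r, c, hc, hind, hspan⟩ := exists_indep_span M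
  have hset : ((M.map (f.restrictScalars ℤ)) : Set (EuclideanSpace ℝ (Fin n)))
      = f '' (M : Set (EuclideanSpace ℝ (Fin n))) := by
    rw [Submodule.map_coe, LinearMap.coe_restrictScalars]
  have hspan2 : Submodule.span ℝ (f '' (M : Set (EuclideanSpace ℝ (Fin n))))
      = Submodule.span ℝ (f '' Set.range c) := by
    rw [Submodule.span_image, Submodule.span_image, hspan]
  obtain ⟨s, hs_sub, hs_span, hs_ind⟩ := exists_linearIndependent ℝ (f '' Set.range c)
  have hfin : s.Finite := Set.Finite.subset ((Set.finite_range c).image f) hs_sub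
  haveI := hfin.fintype
  set e := Fintype.equivFin s with he
  refine ⟨Fintype.card s, fun l => ((e.symm l : s) : EuclideanSpace ℝ (Fin n)), fun l => ?_, ?_, ?_⟩
  · obtain ⟨z, ⟨i, rfl⟩, hz2⟩ := hs_sub (e.symm l).2
    show ((e.symm l : s) : EuclideanSpace ℝ (Fin n)) ∈ _
    rw [← hz2]
    exact ⟨c i, hc i, rfl⟩
  · exact hs_ind.comp e.symm e.symm.injective
  · have h1 : (Set.range fun l => ((e.symm l : s) : EuclideanSpace ℝ (Fin n))) = s := by
      rw [show (fun l => ((e.symm l : s) : EuclideanSpace ℝ (Fin n)))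
          = Subtype.val ∘ ⇑e.symm from rfl,
        Function.Surjective.range_comp e.symm.surjective, Subtype.range_coe]
    rw [h1, hs_span, hset, hspan2]

end Lat


section Aux
variable {n : ℕ}

def projL (U : Submodule ℝ (EuclideanSpace ℝ (Fin n))) :
    EuclideanSpace ℝ (Fin n) →ₗ[ℝ] EuclideanSpace ℝ (Fin n) :=
  U.subtype ∘ₗ (orthogonalProjection U).toLinearMap

lemma projL_apply (U : Submodule ℝ (EuclideanSpace ℝ (Fin n))) (x : EuclideanSpace ℝ (Fin n)) :
    projL U x = (orthogonalProjection U x : EuclideanSpace ℝ (Fin n)) := rfl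

lemma projL_mem (U : Submodule ℝ (EuclideanSpace ℝ (Fin n))) (x) : projL U x ∈ U :=
  (orthogonalProjection U x).2

lemma projL_eq_zero_of_mem_orthogonal {U : Submodule ℝ (EuclideanSpace ℝ (Fin n))} {x}
    (hx : x ∈ Uᗮ) : projL U x = 0 := by
  rw [projL_apply, orthogonalProjection_mem_subspace_orthogonalComplement_eq_zero hx]
  rfl

lemma projL_eq_self_of_mem {U : Submodule ℝ (EuclideanSpace ℝ (Fin n))} {x}
    (hx : x ∈ U) : projL U x = x := by
  rw [projL_apply]
  exact (Submodule.starProjection_eq_self_iff (K := U)).mpr hx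

lemma inner_eq_zero_of_mem_of_mem_orthogonal {U : Submodule ℝ (EuclideanSpace ℝ (Fin n))}
    {a b : EuclideanSpace ℝ (Fin n)} (ha : a ∈ U) (hb : b ∈ Uᗮ) : ⟪a, b⟫ = 0 :=
  (Submodule.mem_orthogonal U b).mp hb a ha

lemma projL_split {U V : Submodule ℝ (EuclideanSpace ℝ (Fin n))} (h : U ≤ V)
    (x : EuclideanSpace ℝ (Fin n)) :
    projL V x = projL U x + projL (V ⊓ Uᗮ) x := by
  rw [projL_apply]
  refine Submodule.eq_starProjection_of_mem_of_inner_eq_zero (K := V)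
    (V.add_mem (h (projL_mem U x)) (inf_le_left (a := V) (b := Uᗮ) (projL_mem _ x))) ?_
  intro w hw
  rw [← Submodule.sup_orthogonal_inf_of_hasOrthogonalProjection h] at hw
  obtain ⟨a, ha, b, hb, rfl⟩ := Submodule.mem_sup.mp hw
  rw [inner_add_right]
  have h1 : ⟪x - (projL U x + projL (V ⊓ Uᗮ) x), a⟫ = 0 := by
    have e : x - (projL U x + projL (V ⊓ Uᗮ) x) = (x - projL U x) - projL (V ⊓ Uᗮ) x := by abel
    rw [e, inner_sub_left]
    have h2 : ⟪x - projL U x, a⟫ = 0 := by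
      rw [real_inner_comm]
      exact (Submodule.sub_starProjection_mem_orthogonal (K := U) x) a ha
    have h3 : ⟪projL (V ⊓ Uᗮ) x, a⟫ = 0 := by
      rw [real_inner_comm]
      exact inner_eq_zero_of_mem_of_mem_orthogonal ha (projL_mem (V ⊓ Uᗮ) x).2
    rw [h2, h3]; ring
  have h4 : ⟪x - (projL U x + projL (V ⊓ Uᗮ) x), b⟫ = 0 := by
    have e : x - (projL U x + projL (V ⊓ Uᗮ) x) = (x - projL (V ⊓ Uᗮ) x) - projL U x := by abel
    have hb' : b ∈ V ⊓ Uᗮ := by rwa [inf_comm]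
    rw [e, inner_sub_left]
    have h2 : ⟪x - projL (V ⊓ Uᗮ) x, b⟫ = 0 := by
      rw [real_inner_comm]
      exact (Submodule.sub_starProjection_mem_orthogonal (K := V ⊓ Uᗮ) x) b hb'
    have h3 : ⟪projL U x, b⟫ = 0 :=
      inner_eq_zero_of_mem_of_mem_orthogonal (projL_mem U x) hb'.2
    rw [h2, h3]; ring
  rw [h1, h4]; ring

/-- the real span of the `j`-th lattice in the chain -/
def Vs (Ls : ℕ → Submodule ℤ (EuclideanSpace ℝ (Fin n))) (j : ℕ) :
    Submodule ℝ (EuclideanSpace ℝ (Fin n)) :=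
  span ℝ (Ls j : Set (EuclideanSpace ℝ (Fin n)))

def Ws (Ls : ℕ → Submodule ℤ (EuclideanSpace ℝ (Fin n))) (i : ℕ) :
    Submodule ℝ (EuclideanSpace ℝ (Fin n)) :=
  Vs Ls i ⊓ (Vs Ls (i - 1))ᗮ

section chain

variable {m : ℕ} {Ls : ℕ → Submodule ℤ (EuclideanSpace ℝ (Fin n))}
  (hmono : ∀ i j, i ≤ j → j ≤ m → Ls i ≤ Ls j)

section
variable (h0 : Ls 0 = ⊥) (hm : Vs Ls m = ⊤)

omit hmono in
lemma Vs_zero (h0 : Ls 0 = ⊥) : Vs Ls 0 = ⊥ := by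
  rw [Vs, h0]
  simp

set_option linter.unusedSectionVars false

include hmono

lemma Vs_mono : ∀ i j, i ≤ j → j ≤ m → Vs Ls i ≤ Vs Ls j := fun i j hij hjm =>
  span_mono (hmono i j hij hjm)

lemma Ws_le_orth {i : ℕ} : Ws Ls i ≤ (Vs Ls (i - 1))ᗮ := inf_le_right

lemma Ws_le_Vs {i : ℕ} : Ws Ls i ≤ Vs Ls i := inf_le_left

include h0

/-- the orthogonal projection onto `Vs k` is the sum of the `π i`, `i ≤ k`. -/
lemma projL_Vs_eq_sum : ∀ k, k ≤ m → ∀ x,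
    projL (Vs Ls k) x = ∑ i ∈ Icc 1 k, projL (Ws Ls i) x := by
  intro k
  induction k with
  | zero =>
    intro _ x
    rw [show (Icc 1 0 : Finset ℕ) = ∅ from rfl, sum_empty,
      projL_eq_zero_of_mem_orthogonal (U := Vs Ls 0)
        (by rw [Vs_zero (Ls := Ls) h0, Submodule.bot_orthogonal_eq_top]; trivial)]
  | succ k ih =>
    intro hk x
    have h1 : Vs Ls k ≤ Vs Ls (k + 1) := Vs_mono hmono k (k+1) (Nat.le_succ k) hk
    have := projL_split h1 x
    have hW : Ws Ls (k+1) = Vs Ls (k+1) ⊓ (Vs Ls k)ᗮ := by rw [Ws]; norm_num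
    rw [hW.symm] at this
    rw [this, ih (Nat.le_of_succ_le hk) x, Finset.sum_Icc_succ_top (Nat.succ_le_succ (Nat.zero_le k))]

include hm in
lemma projL_Vs_orth_eq_sum (hk : ∀ k, k ≤ m → ∀ x,
      projL (Vs Ls k) x = ∑ i ∈ Icc 1 k, projL (Ws Ls i) x) :
    ∀ k, k ≤ m → ∀ x,
    projL (Vs Ls k)ᗮ x = ∑ i ∈ Icc (k+1) m, projL (Ws Ls i) x := by
  intro k hkm x
  have hx : projL (Vs Ls k) x + projL (Vs Ls k)ᗮ x = x := by
    rw [projL_apply, projL_apply]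
    exact Submodule.starProjection_add_starProjection_orthogonal (K := Vs Ls k) x
  have hxm : projL (Vs Ls m) x = x := projL_eq_self_of_mem (by rw [hm]; trivial)
  have hsplit : (∑ i ∈ Icc 1 k, projL (Ws Ls i) x) + ∑ i ∈ Icc (k+1) m, projL (Ws Ls i) x
      = ∑ i ∈ Icc 1 m, projL (Ws Ls i) x := by
    rw [show Icc 1 k = Ioc 0 k by rfl, show Icc (k+1) m = Ioc k m by rw [Finset.Icc_add_one_left_eq_Ioc],
      show Icc 1 m = Ioc 0 m by rfl]
    exact Finset.sum_Ioc_consecutive _ (Nat.zero_le k) hkm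
  have := hk m le_rfl x
  rw [hxm] at this
  have hVk := hk k hkm x
  linear_combination (norm := module) hx - hVk + this - hsplit

omit h0

omit hmono in
lemma lambda1_nonneg (A : Set (EuclideanSpace ℝ (Fin n))) : 0 ≤ lambda1 A :=
  Real.sInf_nonneg (by rintro x ⟨a, _, rfl⟩; exact norm_nonneg _)

omit hmono in
lemma lambda1_le_norm {A : Set (EuclideanSpace ℝ (Fin n))} {a} (ha : a ∈ A) (ha0 : a ≠ 0) :
    lambda1 A ≤ ‖a‖ :=
  csInf_le ⟨0, by rintro x ⟨b, _, rfl⟩; exact norm_nonneg _⟩ ⟨a, ⟨ha, ha0⟩, rfl⟩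

omit hmono in
lemma le_lambda1 {A : Set (EuclideanSpace ℝ (Fin n))} {c : ℝ} (hne : (A \ {0}).Nonempty)
    (h : ∀ a ∈ A, a ≠ 0 → c ≤ ‖a‖) : c ≤ lambda1 A :=
  le_csInf (hne.image _) (by rintro x ⟨b, ⟨hb, hb0⟩, rfl⟩; exact h b hb (by simpa using hb0))

omit hmono in
lemma norm_add_sq_of_inner_eq_zero (a b : EuclideanSpace ℝ (Fin n)) (h : ⟪a, b⟫ = 0) :
    ‖a + b‖ ^ 2 = ‖a‖ ^ 2 + ‖b‖ ^ 2 := by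
  rw [norm_add_sq_real, h]; ring

omit hmono in
lemma filtEmbed_eq_sum (α : ℝ) (j : ℕ) (x : EuclideanSpace ℝ (Fin n)) :
    filtEmbed Ls m α j x = ∑ i ∈ Icc j m, α ^ (i - j) • projL (Ws Ls i) x := rfl

omit hmono in
lemma quotLat_eq_image (j : ℕ) :
    quotLat Ls j = projL ((Vs Ls (j-1))ᗮ) '' (Ls j : Set (EuclideanSpace ℝ (Fin n))) := rfl

lemma filtEmbed_succ_mem_orth (α : ℝ) {j : ℕ} (hj : j ≤ m) (x) :
    filtEmbed Ls m α (j+1) x ∈ (Vs Ls j)ᗮ := by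
  rw [filtEmbed_eq_sum]
  refine Submodule.sum_mem _ fun i hi => Submodule.smul_mem _ _ ?_
  rw [Finset.mem_Icc] at hi
  have h1 : Vs Ls j ≤ Vs Ls (i - 1) := Vs_mono hmono j (i-1) (by omega) (by omega)
  exact (Submodule.orthogonal_le h1) (Ws_le_orth hmono (projL_mem _ x))

omit hmono in
lemma filtEmbed_step (α : ℝ) {j : ℕ} (hj : j ≤ m) (x : EuclideanSpace ℝ (Fin n)) :
    filtEmbed Ls m α j x = projL (Ws Ls j) x + α • filtEmbed Ls m α (j+1) x := by
  rw [filtEmbed_eq_sum, filtEmbed_eq_sum, Finset.Icc_eq_cons_Ioc hj, Finset.sum_cons]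
  congr 1
  · simp
  · rw [Finset.smul_sum, ← Finset.Icc_add_one_left_eq_Ioc]
    refine Finset.sum_congr rfl fun i hi => ?_
    rw [Finset.mem_Icc] at hi
    have he : i - j = (i - (j+1)) + 1 := by omega
    rw [he, pow_succ', smul_smul]

lemma pi_eq_zero_of_mem_Vs {k i : ℕ} (hki : k < i) (him : i - 1 ≤ m)
    {x : EuclideanSpace ℝ (Fin n)} (hx : x ∈ Vs Ls k) : projL (Ws Ls i) x = 0 := by
  refine projL_eq_zero_of_mem_orthogonal ?_
  rw [Submodule.mem_orthogonal]
  intro w hw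
  have hxV : x ∈ Vs Ls (i - 1) := Vs_mono hmono k (i-1) (by omega) him hx
  rw [real_inner_comm]
  exact inner_eq_zero_of_mem_of_mem_orthogonal hxV (Ws_le_orth hmono hw)

include h0 hm in
lemma mem_Vs_of_pi_eq_zero {k : ℕ} (hk : k ≤ m) {x : EuclideanSpace ℝ (Fin n)}
    (hz : ∀ i, k < i → i ≤ m → projL (Ws Ls i) x = 0) : x ∈ Vs Ls k := by
  have hsum := projL_Vs_orth_eq_sum hmono h0 hm (projL_Vs_eq_sum hmono h0) k hk x
  have h2 : projL (Vs Ls k)ᗮ x = 0 := by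
    rw [hsum]
    exact Finset.sum_eq_zero fun i hi => by
      rw [Finset.mem_Icc] at hi; exact hz i (by omega) hi.2
  have hx : projL (Vs Ls k) x + projL (Vs Ls k)ᗮ x = x := by
    rw [projL_apply, projL_apply]
    exact Submodule.starProjection_add_starProjection_orthogonal (K := Vs Ls k) x
  rw [h2, add_zero] at hx
  rw [← hx]; exact projL_mem _ _

lemma inner_pi_pi_eq_zero {i i' : ℕ} (hne : i ≠ i') (him : i ≤ m) (hi'm : i' ≤ m)
    (x y : EuclideanSpace ℝ (Fin n)) :
    ⟪projL (Ws Ls i) x, projL (Ws Ls i') y⟫ = 0 := by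
  have key : ∀ a b : ℕ, a < b → b ≤ m → ∀ u v : EuclideanSpace ℝ (Fin n),
      ⟪projL (Ws Ls a) u, projL (Ws Ls b) v⟫ = 0 := by
    intro a b hab hbm u v
    have h1 : projL (Ws Ls a) u ∈ Vs Ls (b - 1) :=
      Vs_mono hmono a (b-1) (by omega) (by omega) (Ws_le_Vs hmono (projL_mem _ u))
    exact inner_eq_zero_of_mem_of_mem_orthogonal h1 (Ws_le_orth hmono (projL_mem _ v))
  rcases lt_or_gt_of_ne hne with h | h
  · exact key i i' h hi'm x y
  · rw [real_inner_comm]; exact key i' i h him y x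

lemma inner_filtEmbed_pi (α : ℝ) {j i₀ : ℕ} (hji : j ≤ i₀) (hi₀ : i₀ ≤ m)
    (x : EuclideanSpace ℝ (Fin n)) :
    ⟪filtEmbed Ls m α j x, projL (Ws Ls i₀) x⟫
      = α ^ (i₀ - j) * ‖projL (Ws Ls i₀) x‖ ^ 2 := by
  rw [filtEmbed_eq_sum, sum_inner, Finset.sum_eq_single i₀]
  · rw [real_inner_smul_left, real_inner_self_eq_norm_sq]
  · intro i hi hne
    rw [Finset.mem_Icc] at hi
    rw [real_inner_smul_left, inner_pi_pi_eq_zero hmono hne hi.2 hi₀ x x, mul_zero]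
  · intro h; exact absurd (Finset.mem_Icc.mpr ⟨hji, hi₀⟩) h

lemma filtEmbed_eq_pi (α : ℝ) {j : ℕ} (hjm : j ≤ m) {x : EuclideanSpace ℝ (Fin n)}
    (hx : x ∈ Vs Ls j) : filtEmbed Ls m α j x = projL (Ws Ls j) x := by
  rw [filtEmbed_eq_sum, Finset.sum_eq_single j]
  · simp
  · intro i hi hne
    rw [Finset.mem_Icc] at hi
    rw [pi_eq_zero_of_mem_Vs hmono (k := j) (by omega) (by omega) hx, smul_zero]
  · intro h; exact absurd (Finset.mem_Icc.mpr ⟨le_rfl, hjm⟩) h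

include h0 hm in
lemma projPerp_eq_pi {j : ℕ} (hj : 1 ≤ j) (hjm : j ≤ m) {x : EuclideanSpace ℝ (Fin n)}
    (hx : x ∈ Vs Ls j) : projL ((Vs Ls (j-1))ᗮ) x = projL (Ws Ls j) x := by
  have hsum := projL_Vs_orth_eq_sum hmono h0 hm (projL_Vs_eq_sum hmono h0) (j-1) (by omega) x
  rw [show j - 1 + 1 = j by omega] at hsum
  rw [hsum, Finset.sum_eq_single j]
  · intro i hi hne
    rw [Finset.mem_Icc] at hi
    exact pi_eq_zero_of_mem_Vs hmono (k := j) (by omega) (by omega) hx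
  · intro h; exact absurd (Finset.mem_Icc.mpr ⟨le_rfl, hjm⟩) h

include h0 hm in
lemma lemA_caseA {L : Submodule ℤ (EuclideanSpace ℝ (Fin n))}
    (hprim : ∀ k, k ≤ m → (Ls k : Set (EuclideanSpace ℝ (Fin n)))
      = (L : Set (EuclideanSpace ℝ (Fin n)))
        ∩ (Submodule.span ℝ (Ls k : Set (EuclideanSpace ℝ (Fin n))) :
            Submodule ℝ (EuclideanSpace ℝ (Fin n))))
    (α : ℝ) {k : ℕ} (h1 : 1 ≤ k) (hk : k ≤ m) {x} (hxL : x ∈ L)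
    (hz : ∀ i, k < i → i ≤ m → projL (Ws Ls i) x = 0) (hne : filtEmbed Ls m α k x ≠ 0) :
    lambda1 (quotLat Ls k) ≤ ‖filtEmbed Ls m α k x‖ := by
  have hxV : x ∈ Vs Ls k := mem_Vs_of_pi_eq_zero hmono h0 hm hk hz
  have hxLk : x ∈ (Ls k : Set (EuclideanSpace ℝ (Fin n))) := by
    rw [hprim k hk]; exact ⟨hxL, hxV⟩
  have heq : filtEmbed Ls m α k x = projL ((Vs Ls (k-1))ᗮ) x := by
    rw [filtEmbed_eq_pi hmono α hk hxV, projPerp_eq_pi hmono h0 hm h1 hk hxV]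
  have hmem : filtEmbed Ls m α k x ∈ quotLat Ls k := by
    rw [quotLat_eq_image, heq]; exact ⟨x, hxLk, rfl⟩
  exact lambda1_le_norm hmem hne

include h0 hm in
lemma lemA {L : Submodule ℤ (EuclideanSpace ℝ (Fin n))} {α γ : ℝ}
    (hprim : ∀ k, k ≤ m → (Ls k : Set (EuclideanSpace ℝ (Fin n)))
      = (L : Set (EuclideanSpace ℝ (Fin n)))
        ∩ (Submodule.span ℝ (Ls k : Set (EuclideanSpace ℝ (Fin n))) :
            Submodule ℝ (EuclideanSpace ℝ (Fin n))))
    (hgrow : ∀ j, 1 ≤ j → j < m → lambda1 (quotLat Ls (j + 1)) ≥ γ * lambda1 (quotLat Ls j))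
    (hαγ : 1 ≤ α * γ) (hα : 0 < α) :
    ∀ d k, 1 ≤ k → k ≤ m → m - k ≤ d → ∀ x ∈ L, filtEmbed Ls m α k x ≠ 0 →
      lambda1 (quotLat Ls k) ≤ ‖filtEmbed Ls m α k x‖ := by
  intro d
  induction d with
  | zero =>
    intro k h1 hk hmk x hxL hne
    refine lemA_caseA hmono h0 hm hprim α h1 hk hxL (fun i hki him => ?_) hne
    omega
  | succ d ih =>
    intro k h1 hk hmk x hxL hne
    by_cases hz : ∀ i, k < i → i ≤ m → projL (Ws Ls i) x = 0
    · exact lemA_caseA hmono h0 hm hprim α h1 hk hxL hz hne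
    · push_neg at hz
      obtain ⟨i₀, hki₀, hi₀m, hpi₀⟩ := hz
      have hkm : k < m := lt_of_lt_of_le hki₀ hi₀m
      have hinner : ⟪filtEmbed Ls m α (k+1) x, projL (Ws Ls i₀) x⟫
          = α ^ (i₀ - (k+1)) * ‖projL (Ws Ls i₀) x‖ ^ 2 :=
        inner_filtEmbed_pi hmono α (by omega) hi₀m x
      have hpos : (0:ℝ) < α ^ (i₀ - (k+1)) * ‖projL (Ws Ls i₀) x‖ ^ 2 :=
        mul_pos (pow_pos hα _) (pow_pos (norm_pos_iff.mpr hpi₀) _)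
      have hne' : filtEmbed Ls m α (k+1) x ≠ 0 := by
        intro h
        rw [h, inner_zero_left] at hinner
        exact absurd hinner.symm (ne_of_gt hpos)
      have hIH := ih (k+1) (by omega) (by omega) (by omega) x hxL hne'
      have hstep := filtEmbed_step (Ls := Ls) (j := k) α hk x
      have horth : ⟪projL (Ws Ls k) x, α • filtEmbed Ls m α (k+1) x⟫ = 0 := by
        rw [real_inner_smul_right,
          inner_eq_zero_of_mem_of_mem_orthogonal (Ws_le_Vs hmono (projL_mem _ x))
            (filtEmbed_succ_mem_orth hmono α (le_of_lt hkm) x), mul_zero]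
      have hsq : ‖filtEmbed Ls m α k x‖ ^ 2
          = ‖projL (Ws Ls k) x‖ ^ 2 + ‖α • filtEmbed Ls m α (k+1) x‖ ^ 2 := by
        rw [hstep]; exact norm_add_sq_of_inner_eq_zero _ _ horth
      have hge : α * ‖filtEmbed Ls m α (k+1) x‖ ≤ ‖filtEmbed Ls m α k x‖ := by
        refine le_of_pow_le_pow_left₀ two_ne_zero (norm_nonneg _) ?_
        rw [hsq, norm_smul, Real.norm_eq_abs, abs_of_pos hα, mul_pow]
        nlinarith [sq_nonneg (‖projL (Ws Ls k) x‖)]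
      have hgrow' := hgrow k h1 hkm
      have l1 := lambda1_nonneg (quotLat Ls k)
      have l2 := lambda1_nonneg (quotLat Ls (k+1))
      nlinarith [mul_le_mul_of_nonneg_left hIH hα.le,
        mul_le_mul_of_nonneg_left hgrow' hα.le,
        mul_le_mul_of_nonneg_right hαγ l1]


include h0 hm in
lemma filtEmbed_of_mem_Lsj (α : ℝ) {j : ℕ} (hj : 1 ≤ j) (hjm : j ≤ m)
    {w : EuclideanSpace ℝ (Fin n)} (hw : w ∈ Ls j) :
    filtEmbed Ls m α j w = projL ((Vs Ls (j-1))ᗮ) w := by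
  have hwV : w ∈ Vs Ls j := Submodule.subset_span hw
  rw [filtEmbed_eq_pi hmono α hjm hwV, projPerp_eq_pi hmono h0 hm hj hjm hwV]

omit hmono hm in
lemma projPerp_ne_zero {L : Submodule ℤ (EuclideanSpace ℝ (Fin n))}
    (hprim : ∀ k, k ≤ m → (Ls k : Set (EuclideanSpace ℝ (Fin n)))
      = (L : Set (EuclideanSpace ℝ (Fin n)))
        ∩ (Submodule.span ℝ (Ls k : Set (EuclideanSpace ℝ (Fin n))) :
            Submodule ℝ (EuclideanSpace ℝ (Fin n))))
    {j : ℕ} (hj : 1 ≤ j) (hjm : j ≤ m) (hLL : ∀ k, k ≤ m → Ls k ≤ L)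
    {w : EuclideanSpace ℝ (Fin n)} (hw : w ∈ Ls j) (hw1 : w ∉ Ls (j-1)) :
    projL ((Vs Ls (j-1))ᗮ) w ≠ 0 := by
  intro h
  have hdec : projL (Vs Ls (j-1)) w + projL ((Vs Ls (j-1))ᗮ) w = w := by
    rw [projL_apply, projL_apply]
    exact Submodule.starProjection_add_starProjection_orthogonal (K := Vs Ls (j-1)) w
  rw [h, add_zero] at hdec
  have hwV : w ∈ Vs Ls (j-1) := hdec ▸ projL_mem _ _
  have : w ∈ (Ls (j-1) : Set (EuclideanSpace ℝ (Fin n))) := by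
    rw [hprim (j-1) (by omega)]; exact ⟨hLL j hjm hw, hwV⟩
  exact hw1 this

include h0 hm in
lemma lambda1_filtEmbed_eq {L : Submodule ℤ (EuclideanSpace ℝ (Fin n))} {α γ : ℝ}
    (hprim : ∀ k, k ≤ m → (Ls k : Set (EuclideanSpace ℝ (Fin n)))
      = (L : Set (EuclideanSpace ℝ (Fin n)))
        ∩ (Submodule.span ℝ (Ls k : Set (EuclideanSpace ℝ (Fin n))) :
            Submodule ℝ (EuclideanSpace ℝ (Fin n))))
    (hgrow : ∀ j, 1 ≤ j → j < m → lambda1 (quotLat Ls (j + 1)) ≥ γ * lambda1 (quotLat Ls j))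
    (hαγ : 1 ≤ α * γ) (hα : 0 < α)
    (hlt : ∀ j, j < m → Ls j < Ls (j+1)) (hLL : ∀ k, k ≤ m → Ls k ≤ L)
    {j : ℕ} (hj : 1 ≤ j) (hjm : j ≤ m) :
    lambda1 (filtEmbed Ls m α j '' (L : Set (EuclideanSpace ℝ (Fin n))))
      = lambda1 (quotLat Ls j) := by
  -- a nonzero common witness
  have hlt' : Ls (j-1) < Ls j := by
    have := hlt (j-1) (by omega)
    rwa [show j - 1 + 1 = j by omega] at this
  obtain ⟨w, hwj, hwj1⟩ := SetLike.exists_of_lt hlt'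
  set u := projL ((Vs Ls (j-1))ᗮ) w with hu
  have hune : u ≠ 0 := projPerp_ne_zero hprim hj hjm hLL hwj hwj1
  have huq : u ∈ quotLat Ls j := by
    rw [quotLat_eq_image]; exact ⟨w, hwj, rfl⟩
  have huE : u ∈ filtEmbed Ls m α j '' (L : Set (EuclideanSpace ℝ (Fin n))) :=
    ⟨w, hLL j hjm hwj, (filtEmbed_of_mem_Lsj hmono h0 hm α hj hjm hwj).symm ▸ rfl⟩
  have hne1 : ((filtEmbed Ls m α j '' (L : Set (EuclideanSpace ℝ (Fin n)))) \ {0}).Nonempty :=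
    ⟨u, huE, hune⟩
  have hne2 : ((quotLat Ls j) \ {0}).Nonempty := ⟨u, huq, hune⟩
  refine le_antisymm ?_ ?_
  · refine le_lambda1 hne2 fun a ha ha0 => ?_
    obtain ⟨w', hw', rfl⟩ := ha
    refine lambda1_le_norm ⟨w', hLL j hjm hw', ?_⟩ ha0
    exact filtEmbed_of_mem_Lsj hmono h0 hm α hj hjm hw'
  · refine le_lambda1 hne1 fun a ha ha0 => ?_
    obtain ⟨x, hxL, rfl⟩ := ha
    exact lemA hmono h0 hm hprim hgrow hαγ hα m j hj hjm (by omega) x hxL ha0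


omit hmono in
lemma sum_lambda1_le {γ : ℝ} (hγ : 2 ≤ γ)
    (hgrow : ∀ j, 1 ≤ j → j < m → lambda1 (quotLat Ls (j + 1)) ≥ γ * lambda1 (quotLat Ls j))
    {j : ℕ} (h1 : 1 ≤ j) (hjm : j ≤ m) :
    ∑ i ∈ Icc 1 j, lambda1 (quotLat Ls i) ≤ 2 * lambda1 (quotLat Ls j) := by
  have key : ∀ d i, 1 ≤ i → i + d ≤ m →
      lambda1 (quotLat Ls i) ≤ (1/2)^d * lambda1 (quotLat Ls (i + d)) := by
    intro d
    induction d with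
    | zero => intro i _ _; simp
    | succ d ih =>
      intro i h1i hidm
      have h2 := ih i h1i (by omega)
      have h3 : 2 * lambda1 (quotLat Ls (i+d)) ≤ lambda1 (quotLat Ls (i+d+1)) := by
        have hg := hgrow (i+d) (by omega) (by omega)
        nlinarith [lambda1_nonneg (quotLat Ls (i+d))]
      have hnn := lambda1_nonneg (quotLat Ls (i+d+1))
      have h4 : lambda1 (quotLat Ls (i+d)) ≤ (1/2) * lambda1 (quotLat Ls (i+d+1)) := by linarith
      have h5 : (1/2:ℝ)^d * lambda1 (quotLat Ls (i+d))
          ≤ (1/2)^d * ((1/2) * lambda1 (quotLat Ls (i+d+1))) :=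
        mul_le_mul_of_nonneg_left h4 (by positivity)
      have h6 : (1/2:ℝ)^d * ((1/2) * lambda1 (quotLat Ls (i+d+1)))
          = (1/2)^(d+1) * lambda1 (quotLat Ls (i+(d+1))) := by
        rw [show i+(d+1) = i+d+1 by omega]; ring
      linarith
  have step1 : ∑ i ∈ Icc 1 j, lambda1 (quotLat Ls i)
      ≤ ∑ i ∈ Icc 1 j, (1/2:ℝ)^(j-i) * lambda1 (quotLat Ls j) := by
    refine Finset.sum_le_sum fun i hi => ?_
    rw [Finset.mem_Icc] at hi
    have hk := key (j - i) i hi.1 (by omega)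
    rwa [show i + (j-i) = j by omega] at hk
  refine le_trans step1 ?_
  rw [← Finset.sum_mul]
  have hgs : ∑ i ∈ Icc 1 j, (1/2:ℝ)^(j-i) ≤ 2 := by
    have hre : ∑ i ∈ Icc 1 j, (1/2:ℝ)^(j-i) = ∑ d ∈ Finset.range j, (1/2:ℝ)^d := by
      refine Finset.sum_nbij' (fun i => j - i) (fun d => j - d) ?_ ?_ ?_ ?_ ?_
      · intro a ha; rw [Finset.mem_Icc] at ha; rw [Finset.mem_range]; omega
      · intro d hd; rw [Finset.mem_range] at hd; rw [Finset.mem_Icc]; omega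
      · intro a ha; rw [Finset.mem_Icc] at ha; omega
      · intro d hd; rw [Finset.mem_range] at hd; omega
      · intro a _; rfl
    rw [hre]
    exact sum_geometric_two_le j
  exact mul_le_mul_of_nonneg_right hgs (lambda1_nonneg _)

omit hmono in
lemma quotLat_coe (j : ℕ) : quotLat Ls j
    = (((Ls j).map ((projL ((Vs Ls (j-1))ᗮ)).restrictScalars ℤ))
        : Set (EuclideanSpace ℝ (Fin n))) := by
  rw [quotLat_eq_image, Submodule.map_coe, LinearMap.coe_restrictScalars]

omit hmono in
lemma infDist_le_covRad_quotLat {L : Submodule ℤ (EuclideanSpace ℝ (Fin n))}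
    [DiscreteTopology ↥L] {j : ℕ} (hLj : Ls j ≤ L) {y : EuclideanSpace ℝ (Fin n)}
    (hy : y ∈ Submodule.span ℝ (quotLat Ls j)) :
    infDist y (quotLat Ls j) ≤ covRad (quotLat Ls j) := by
  haveI : DiscreteTopology (Ls j) := discrete_submodule_of_le hLj
  obtain ⟨r, c, hc, hind, hspan⟩ := exists_indep_span_map (Ls j) (projL ((Vs Ls (j-1))ᗮ))
  refine le_csSup ⟨∑ l, ‖c l‖, ?_⟩ ⟨y, hy, rfl⟩
  rintro v ⟨z, hz, rfl⟩
  have hz' : z ∈ Submodule.span ℝ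
      ((((Ls j).map ((projL ((Vs Ls (j-1))ᗮ)).restrictScalars ℤ))
        : Set (EuclideanSpace ℝ (Fin n)))) := by
    rw [← quotLat_coe]; exact hz
  rw [quotLat_coe]
  exact infDist_le_sum_norm hc hind hspan z hz'

include h0 in
lemma part1_covering {L : Submodule ℤ (EuclideanSpace ℝ (Fin n))} [DiscreteTopology ↥L] {q : ℝ}
    (hcov : ∀ j, 1 ≤ j → j ≤ m → covRad (quotLat Ls j) ≤ q * lambda1 (quotLat Ls j) / 2)
    (hLL : ∀ k, k ≤ m → Ls k ≤ L) :
    ∀ j, j ≤ m → ∀ x ∈ Vs Ls j,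
      infDist x ((Ls j : Set (EuclideanSpace ℝ (Fin n))))
        ≤ (q/2) * ∑ i ∈ Icc 1 j, lambda1 (quotLat Ls i) := by
  intro j
  induction j with
  | zero =>
    intro _ x hx
    rw [Vs_zero (Ls := Ls) h0, Submodule.mem_bot] at hx
    subst hx
    rw [show (Icc 1 0 : Finset ℕ) = ∅ from rfl, Finset.sum_empty, mul_zero]
    exact le_of_eq (Metric.infDist_zero_of_mem (Submodule.zero_mem (Ls 0)))
  | succ j ih =>
    intro hj1m x hx
    have hQne : (quotLat Ls (j+1)).Nonempty :=
      ⟨_, ⟨0, Submodule.zero_mem _, rfl⟩⟩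
    refine le_of_forall_pos_le_add fun ε hε => ?_
    have hyspan : projL ((Vs Ls j)ᗮ) x ∈ Submodule.span ℝ (quotLat Ls (j+1)) := by
      rw [quotLat_eq_image, Submodule.span_image]
      exact ⟨x, hx, rfl⟩
    have h1 : infDist (projL ((Vs Ls j)ᗮ) x) (quotLat Ls (j+1))
        ≤ q * lambda1 (quotLat Ls (j+1)) / 2 :=
      le_trans (infDist_le_covRad_quotLat (hLL (j+1) hj1m) hyspan)
        (hcov (j+1) (by omega) hj1m)
    obtain ⟨a, haQ, hya⟩ := (Metric.infDist_lt_iff hQne).mp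
      (show infDist (projL ((Vs Ls j)ᗮ) x) (quotLat Ls (j+1))
        < q * lambda1 (quotLat Ls (j+1)) / 2 + ε/2 by linarith [half_pos hε])
    obtain ⟨w, hw, hwa⟩ := haQ
    have hz : projL (Vs Ls j) (x - w) ∈ Vs Ls j := projL_mem _ _
    have h2 := ih (by omega) _ hz
    obtain ⟨u, huLs, hzu⟩ := (Metric.infDist_lt_iff ⟨0, Submodule.zero_mem (Ls j)⟩).mp
      (show infDist (projL (Vs Ls j) (x - w)) ((Ls j : Set (EuclideanSpace ℝ (Fin n))))
        < (q/2) * ∑ i ∈ Icc 1 j, lambda1 (quotLat Ls i) + ε/2 by linarith [half_pos hε])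
    have huw : u + w ∈ Ls (j+1) := (Ls (j+1)).add_mem (hmono j (j+1) (by omega) hj1m huLs) hw
    have hdecomp : projL (Vs Ls j) (x - w) + projL ((Vs Ls j)ᗮ) (x - w) = x - w := by
      rw [projL_apply, projL_apply]
      exact Submodule.starProjection_add_starProjection_orthogonal (K := Vs Ls j) (x - w)
    have hwa' : projL ((Vs Ls j)ᗮ) w = a := hwa
    have hPx : projL ((Vs Ls j)ᗮ) (x - w) = projL ((Vs Ls j)ᗮ) x - a := by
      rw [map_sub, hwa']
    have hxuw : x - (u + w)
        = (projL (Vs Ls j) (x - w) - u) + projL ((Vs Ls j)ᗮ) (x - w) := by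
      linear_combination (norm := module) -hdecomp
    calc infDist x ((Ls (j+1) : Set (EuclideanSpace ℝ (Fin n))))
        ≤ dist x (u + w) := infDist_le_dist_of_mem huw
      _ = ‖x - (u+w)‖ := dist_eq_norm _ _
      _ ≤ ‖projL (Vs Ls j) (x - w) - u‖ + ‖projL ((Vs Ls j)ᗮ) x - a‖ := by
          rw [hxuw, hPx]; exact norm_add_le _ _
      _ = dist (projL (Vs Ls j) (x - w)) u + dist (projL ((Vs Ls j)ᗮ) x) a := by
          rw [dist_eq_norm, dist_eq_norm]
      _ ≤ ((q/2) * ∑ i ∈ Icc 1 j, lambda1 (quotLat Ls i) + ε/2)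
            + (q * lambda1 (quotLat Ls (j+1)) / 2 + ε/2) := by linarith
      _ = (q/2) * ∑ i ∈ Icc 1 (j+1), lambda1 (quotLat Ls i) + ε := by
          rw [Finset.sum_Icc_succ_top (by omega : 1 ≤ j+1)]
          ring

end

end chain

end Aux

/-- For a `(q, γ)`-filtration of `L` with `γ ≥ 2` and `1/γ ≤ α < 1`:
(1) `μ(L_j) ≤ q·λ₁(E_{j,α}(L))` for all `1 ≤ j ≤ m`, and
(2) `λ₁(E_{j+1,α}(L)) ≥ γ·λ₁(E_{j,α}(L))` for all `1 ≤ j < m`. -/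
theorem covRad_le_and_lambda1_ge_of_filtration
    (n : ℕ) (L : Submodule ℤ (EuclideanSpace ℝ (Fin n))) [DiscreteTopology L] (hL : IsZLattice ℝ L)
    (m : ℕ) (Ls : ℕ → Submodule ℤ (EuclideanSpace ℝ (Fin n))) (q γ : ℝ) (hq : 1 ≤ q) (hγ : 2 ≤ γ)
    (hfil : IsQGFiltration L m Ls q γ) (α : ℝ) (hα0 : 1 / γ ≤ α) (hα1 : α < 1) :
    (∀ j, 1 ≤ j → j ≤ m →
        covRad (Ls j : Set (EuclideanSpace ℝ (Fin n)))
          ≤ q * lambda1 (filtEmbed Ls m α j '' (L : Set (EuclideanSpace ℝ (Fin n))))) ∧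
      (∀ j, 1 ≤ j → j < m →
        lambda1 (filtEmbed Ls m α (j + 1) '' (L : Set (EuclideanSpace ℝ (Fin n))))
          ≥ γ * lambda1 (filtEmbed Ls m α j '' (L : Set (EuclideanSpace ℝ (Fin n))))) := by
  obtain ⟨hchain, hcov, hgrow⟩ := hfil
  obtain ⟨h0, hLm, hlt, hprim⟩ := hchain
  have hγ0 : (0:ℝ) < γ := lt_of_lt_of_le two_pos hγ
  have hα : (0:ℝ) < α := lt_of_lt_of_le (by positivity) hα0
  have hαγ : 1 ≤ α * γ := (div_le_iff₀ hγ0).mp hα0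
  have hmono : ∀ i j, i ≤ j → j ≤ m → Ls i ≤ Ls j := by
    intro i j
    induction j with
    | zero => intro h1 _; have : i = 0 := Nat.le_zero.mp h1; simp [this]
    | succ k ih =>
      intro h1 h2
      rcases Nat.eq_or_lt_of_le h1 with h | h
      · exact h ▸ le_rfl
      · exact le_trans (ih (by omega) (by omega)) (hlt k (by omega)).le
  have hm : Vs Ls m = ⊤ := by rw [Vs, hLm]; exact hL.span_top
  have hLL : ∀ k, k ≤ m → Ls k ≤ L := fun k hk => hLm ▸ hmono k m hk le_rfl
  constructor
  · intro j h1 hjm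
    rw [lambda1_filtEmbed_eq hmono h0 hm hprim hgrow hαγ hα hlt hLL h1 hjm]
    have hq0 : (0:ℝ) ≤ q := by linarith
    refine Real.sSup_le ?_ (mul_nonneg hq0 (lambda1_nonneg _))
    rintro v ⟨x, hxspan, rfl⟩
    have hb := part1_covering hmono h0 hcov hLL j hjm x hxspan
    have hsum := sum_lambda1_le hγ hgrow h1 hjm
    have h3 : (q/2) * (∑ i ∈ Finset.Icc 1 j, lambda1 (quotLat Ls i))
        ≤ (q/2) * (2 * lambda1 (quotLat Ls j)) :=
      mul_le_mul_of_nonneg_left hsum (by linarith)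
    calc infDist x ((Ls j : Set (EuclideanSpace ℝ (Fin n))))
        ≤ (q/2) * ∑ i ∈ Finset.Icc 1 j, lambda1 (quotLat Ls i) := hb
      _ ≤ (q/2) * (2 * lambda1 (quotLat Ls j)) := h3
      _ = q * lambda1 (quotLat Ls j) := by ring
  · intro j h1 hjm
    rw [lambda1_filtEmbed_eq hmono h0 hm hprim hgrow hαγ hα hlt hLL (by omega) (by omega),
        lambda1_filtEmbed_eq hmono h0 hm hprim hgrow hαγ hα hlt hLL h1 (le_of_lt hjm)]
    exact hgrow j h1 hjm
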